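/- arXiv:1710.02934 — 3 statements merged into one kernel-verified Lean document; each statement's English description precedes it below -/
import Mathlib

section
/- (Balancing equilibrium existence, symmetric matrix version) Let n ≥ 3 and suppose all countries are pairwise adversaries. There exists a nonnegative symmetric matrix U with zero diagonal such that for every i, Σ_{j≠i} U_{ij} = p_i, if and only if for every i, p_i ≤ Σ_{j≠i} p_j. -/
open Finset

/-- Real-valued construction over an arbitrary finset, by strong induction on its card. -/
lemma balancing_aux {V : Type} [DecidableEq V] (N : ℕ) :
    ∀ (s : Finset V), s.card = N → 3 ≤ N → ∀ p : V → ℝ,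
      (∀ i ∈ s, 0 ≤ p i) → (∀ i ∈ s, 2 * p i ≤ ∑ j ∈ s, p j) →
      ∃ U : V → V → ℝ, (∀ i j, 0 ≤ U i j) ∧ (∀ i, U i i = 0) ∧
        (∀ i j, U i j = U j i) ∧ (∀ i ∈ s, ∑ j ∈ s, U i j = p i) := by
  induction N using Nat.strong_induction_on with
  | _ N ih =>
    intro s hcard hN p hnn hbal
    rcases eq_or_lt_of_le hN with hN3 | hN4
    · -- base case: card s = 3
      set S := ∑ j ∈ s, p j with hS
      refine ⟨fun x y => if x = y then 0 else if x ∈ s ∧ y ∈ s then p x + p y - S/2 else 0,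
        ?_, ?_, ?_, ?_⟩
      · intro i j
        dsimp only
        split_ifs with h1 h2
        · exact le_refl 0
        · obtain ⟨hi, hj⟩ := h2
          have hji : j ∈ s.erase i := Finset.mem_erase.mpr ⟨fun h => h1 h.symm, hj⟩
          have hc1 : ((s.erase i).erase j).card = 1 := by
            rw [Finset.card_erase_of_mem hji, Finset.card_erase_of_mem hi, hcard, ← hN3]
          obtain ⟨z, hz⟩ := Finset.card_eq_one.mp hc1
          have hzmem : z ∈ (s.erase i).erase j := by rw [hz]; exact Finset.mem_singleton_self z
          have hzs : z ∈ s := Finset.mem_of_mem_erase (Finset.mem_of_mem_erase hzmem)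
          have hsum : S = p i + (p j + p z) := by
            rw [hS, ← Finset.add_sum_erase s p hi, ← Finset.add_sum_erase _ p hji, hz,
              Finset.sum_singleton]
          have := hbal z hzs
          linarith
        · exact le_refl 0
      · intro i; simp
      · intro i j
        dsimp only
        by_cases h : i = j
        · subst h; rfl
        · simp only [if_neg h, if_neg (Ne.symm h)]
          split_ifs with h1 h2 h3 <;> first | rfl | tauto | ring
      · intro i hi
        dsimp only
        have h1 : ∑ j ∈ s, (if i = j then 0 else if i ∈ s ∧ j ∈ s then p i + p j - S/2 else 0)
            = ∑ j ∈ s.erase i, (p i + p j - S/2) := by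
          rw [← Finset.add_sum_erase s _ hi, if_pos rfl, zero_add]
          refine Finset.sum_congr rfl fun j hj => ?_
          have hji := Finset.mem_erase.mp hj
          rw [if_neg (fun h => hji.1 h.symm), if_pos ⟨hi, hji.2⟩]
        rw [h1]
        have h2 : ∑ j ∈ s.erase i, p j = S - p i := by
          rw [hS, ← Finset.add_sum_erase s p hi]; ring
        rw [Finset.sum_sub_distrib, Finset.sum_add_distrib, Finset.sum_const, Finset.sum_const,
          h2, Finset.card_erase_of_mem hi, hcard, ← hN3]
        push_cast
        ring
    · -- inductive step: card s = N ≥ 4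
      have hs0 : s.Nonempty := Finset.card_pos.mp (by omega)
      obtain ⟨a, has, hamin⟩ := Finset.exists_min_image s p hs0
      have hsa : (s.erase a).Nonempty := by
        apply Finset.card_pos.mp; rw [Finset.card_erase_of_mem has]; omega
      obtain ⟨b, hbs', hbmin⟩ := Finset.exists_min_image (s.erase a) p hsa
      obtain ⟨hba, hbs⟩ := Finset.mem_erase.mp hbs'
      have hsab : (((s.erase a).erase b)).Nonempty := by
        apply Finset.card_pos.mp
        rw [Finset.card_erase_of_mem hbs', Finset.card_erase_of_mem has]; omega
      obtain ⟨c, hcs''⟩ := hsab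
      obtain ⟨hcb, hcs'⟩ := Finset.mem_erase.mp hcs''
      obtain ⟨hca, hcs⟩ := Finset.mem_erase.mp hcs'
      have hsabc : ((((s.erase a).erase b)).erase c).Nonempty := by
        apply Finset.card_pos.mp
        rw [Finset.card_erase_of_mem hcs'', Finset.card_erase_of_mem hbs',
          Finset.card_erase_of_mem has]; omega
      obtain ⟨d, hds'''⟩ := hsabc
      obtain ⟨hdc, hds''⟩ := Finset.mem_erase.mp hds'''
      obtain ⟨hdb, hds'⟩ := Finset.mem_erase.mp hds''
      obtain ⟨hda, hds⟩ := Finset.mem_erase.mp hds'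
      set S := ∑ j ∈ s, p j with hS
      -- key inequality : 2 * (p a + p b) ≤ S
      have hkey : 2 * (p a + p b) ≤ S := by
        have h1 : p a ≤ p c := hamin c hcs
        have h2 : p b ≤ p d := hbmin d hds'
        have hsub : ({a, b, c, d} : Finset V) ⊆ s := by
          intro x hx
          simp only [Finset.mem_insert, Finset.mem_singleton] at hx
          rcases hx with h | h | h | h <;> subst h <;> assumption
        have hsum4 : ∑ j ∈ ({a, b, c, d} : Finset V), p j = p a + p b + p c + p d := by
          rw [Finset.sum_insert (by simp [hba.symm, hca.symm, hda.symm]),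
            Finset.sum_insert (by simp [hcb.symm, hdb.symm]),
            Finset.sum_insert (by simp [hdc.symm]), Finset.sum_singleton]
          ring
        have hle : ∑ j ∈ ({a, b, c, d} : Finset V), p j ≤ S := by
          apply Finset.sum_le_sum_of_subset_of_nonneg hsub
          intro i hi _; exact hnn i hi
        rw [hsum4] at hle
        linarith
      -- merged problem
      set s' := s.erase b with hs'def
      set p' := Function.update p a (p a + p b) with hp'def
      have has' : a ∈ s' := Finset.mem_erase.mpr ⟨fun h => hba h.symm, has⟩
      have hcard' : s'.card = N - 1 := by rw [hs'def, Finset.card_erase_of_mem hbs, hcard]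
      have hp'a : p' a = p a + p b := Function.update_self a _ p
      have hp'ne : ∀ x, x ≠ a → p' x = p x := fun x hx => Function.update_of_ne hx _ p
      have hS' : ∑ j ∈ s', p' j = S := by
        rw [← Finset.add_sum_erase s' p' has', hp'a]
        have e1 : ∑ j ∈ s'.erase a, p' j = ∑ j ∈ s'.erase a, p j := by
          refine Finset.sum_congr rfl fun j hj => hp'ne j (Finset.mem_erase.mp hj).1
        rw [e1, hS, ← Finset.add_sum_erase s p hbs]
        have e2 : ∑ j ∈ s.erase b, p j = p a + ∑ j ∈ (s.erase b).erase a, p j :=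
          (Finset.add_sum_erase _ p has').symm
        rw [e2]; ring
      have hnn' : ∀ i ∈ s', 0 ≤ p' i := by
        intro i hi
        by_cases h : i = a
        · rw [h, hp'a]; have := hnn a has; have := hnn b hbs; linarith
        · rw [hp'ne i h]; exact hnn i (Finset.mem_of_mem_erase hi)
      have hbal' : ∀ i ∈ s', 2 * p' i ≤ ∑ j ∈ s', p' j := by
        intro i hi
        rw [hS']
        by_cases h : i = a
        · rw [h, hp'a]; exact hkey
        · rw [hp'ne i h]; exact hbal i (Finset.mem_of_mem_erase hi)
      obtain ⟨U', hU'0, hU'd, hU's, hU'r⟩ :=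
        ih (N - 1) (by omega) s' hcard' (by omega) p' hnn' hbal'
      -- split parameter
      set t := p a / (p a + p b) with htdef
      have hpa0 := hnn a has
      have hpb0 := hnn b hbs
      have ht0 : 0 ≤ t := div_nonneg hpa0 (by linarith)
      have ht1 : t ≤ 1 := by
        apply div_le_one_of_le₀ (by linarith) (by linarith)
      have ht1' : 0 ≤ 1 - t := by linarith
      have hta : t * (p a + p b) = p a := by
        by_cases h : p a + p b = 0
        · have hpa : p a = 0 := by linarith
          rw [htdef, h, div_zero, zero_mul, hpa]
        · rw [htdef, div_mul_cancel₀ _ h]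
      have htb : (1 - t) * (p a + p b) = p b := by
        rw [sub_mul, one_mul, hta]; ring
      refine ⟨fun x y =>
        if x = b then (if y = b then 0 else (1 - t) * U' a y)
        else if y = b then (1 - t) * U' x a
        else if x = a then t * U' a y
        else if y = a then t * U' x a
        else U' x y, ?_, ?_, ?_, ?_⟩
      · intro i j
        dsimp only
        split_ifs <;>
          first
            | exact le_refl 0
            | exact mul_nonneg ht1' (hU'0 _ _)
            | exact mul_nonneg ht0 (hU'0 _ _)
            | exact hU'0 _ _
      · intro i
        dsimp only
        by_cases h1 : i = b
        · simp [h1]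
        · by_cases h2 : i = a <;> simp [h1, h2, hU'd]
      · intro i j
        have hab : ¬ (a = b) := fun h => hba h.symm
        dsimp only
        by_cases h1 : i = b
        · by_cases h2 : j = b
          · simp [h1, h2]
          · simp [h1, h2, hU's a j]
        · by_cases h2 : j = b
          · simp [h1, h2, hU's i a]
          · by_cases h3 : i = a
            · by_cases h4 : j = a
              · simp [h1, h2, h3, h4]
              · simp [h1, h2, h3, h4, hab, hU's a j]
            · by_cases h4 : j = a
              · simp [h1, h2, h3, h4, hab, hU's i a]
              · simp [h1, h2, h3, h4, hU's i j]
      · intro i hi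
        dsimp only
        by_cases hib : i = b
        · rw [hib]
          rw [← Finset.add_sum_erase s _ hbs, if_pos rfl, if_pos rfl, zero_add]
          have e1 : ∑ j ∈ s.erase b,
              (if (b:V) = b then (if j = b then 0 else (1 - t) * U' a j)
               else if j = b then (1 - t) * U' b a
               else if (b:V) = a then t * U' a j
               else if j = a then t * U' b a
               else U' b j) = ∑ j ∈ s', (1 - t) * U' a j := by
            refine Finset.sum_congr rfl fun j hj => ?_
            rw [if_pos rfl, if_neg (Finset.mem_erase.mp hj).1]
          rw [e1, ← Finset.mul_sum, hU'r a has', hp'a, htb]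
        by_cases hia : i = a
        · rw [hia]
          rw [← Finset.add_sum_erase s _ hbs]
          have hab : a ≠ b := fun h => hba h.symm
          rw [if_neg hab, if_pos rfl, hU'd a, mul_zero, zero_add]
          have e1 : ∑ j ∈ s.erase b,
              (if (a:V) = b then (if j = b then 0 else (1 - t) * U' a j)
               else if j = b then 0
               else if (a:V) = a then t * U' a j
               else if j = a then t * 0
               else U' a j) = ∑ j ∈ s', t * U' a j := by
            refine Finset.sum_congr rfl fun j hj => ?_
            rw [if_neg hab, if_neg (Finset.mem_erase.mp hj).1, if_pos rfl]
          rw [e1, ← Finset.mul_sum, hU'r a has', hp'a, hta]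
        · -- i ≠ a, b
          have his' : i ∈ s' := Finset.mem_erase.mpr ⟨hib, hi⟩
          have his'a : i ∈ s'.erase a := Finset.mem_erase.mpr ⟨hia, his'⟩
          rw [← Finset.add_sum_erase s _ hbs]
          rw [if_neg hib, if_pos rfl]
          have e1 : ∑ j ∈ s.erase b,
              (if i = b then (if j = b then 0 else (1 - t) * U' a j)
               else if j = b then (1 - t) * U' i a
               else if i = a then t * U' a j
               else if j = a then t * U' i a
               else U' i j)
              = t * U' i a + ∑ j ∈ s'.erase a, U' i j := by
            rw [← Finset.add_sum_erase s' _ has', if_neg hib,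
              if_neg (fun h : (a:V) = b => hba h.symm), if_neg hia, if_pos rfl]
            congr 1
            refine Finset.sum_congr rfl fun j hj => ?_
            have hja := (Finset.mem_erase.mp hj).1
            have hjb := (Finset.mem_erase.mp (Finset.mem_of_mem_erase hj)).1
            rw [if_neg hib, if_neg hjb, if_neg hia, if_neg hja]
          rw [e1]
          have e2 : ∑ j ∈ s'.erase a, U' i j = p i - U' i a := by
            have := hU'r i his'
            rw [← Finset.add_sum_erase s' _ has'] at this
            rw [hp'ne i hia] at this
            linarith
          rw [e2]
          ring

theorem balancing_equilibrium_iff {n : ℕ} (hn : 3 ≤ n) (p : Fin n → NNReal) :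
    (∃ U : Fin n → Fin n → NNReal,
      (∀ i, U i i = 0) ∧ (∀ i j, U i j = U j i) ∧ (∀ i, ∑ j, U i j = p i)) ↔
    (∀ i, p i ≤ ∑ j ∈ Finset.univ.erase i, p j) := by
  constructor
  · rintro ⟨U, hdiag, hsymm, hrow⟩ i
    have h1 : p i = ∑ j ∈ Finset.univ.erase i, U i j := by
      rw [← hrow i, ← Finset.add_sum_erase Finset.univ _ (Finset.mem_univ i), hdiag i, zero_add]
    rw [h1]
    apply Finset.sum_le_sum
    intro j hj
    calc U i j = U j i := hsymm i j
      _ ≤ ∑ k, U j k := Finset.single_le_sum (fun k _ => zero_le) (Finset.mem_univ i)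
      _ = p j := hrow j
  · intro h
    have hcard : (Finset.univ : Finset (Fin n)).card = n := by simp
    have hnn : ∀ i ∈ (Finset.univ : Finset (Fin n)), (0:ℝ) ≤ (p i : ℝ) := fun i _ => (p i).coe_nonneg
    have hbal : ∀ i ∈ (Finset.univ : Finset (Fin n)),
        2 * (p i : ℝ) ≤ ∑ j ∈ Finset.univ, (p j : ℝ) := by
      intro i _
      have h1 : (p i : ℝ) ≤ ∑ j ∈ Finset.univ.erase i, (p j : ℝ) := by
        have := h i
        calc (p i : ℝ) ≤ ((∑ j ∈ Finset.univ.erase i, p j : NNReal) : ℝ) := by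
              exact_mod_cast this
          _ = ∑ j ∈ Finset.univ.erase i, (p j : ℝ) := by push_cast; rfl
      have h2 : ∑ j ∈ (Finset.univ : Finset (Fin n)), (p j : ℝ)
          = (p i : ℝ) + ∑ j ∈ Finset.univ.erase i, (p j : ℝ) :=
        (Finset.add_sum_erase Finset.univ _ (Finset.mem_univ i)).symm
      linarith
    obtain ⟨U, hU0, hUd, hUs, hUr⟩ :=
      balancing_aux n Finset.univ hcard hn (fun i => (p i : ℝ)) hnn hbal
    refine ⟨fun i j => (U i j).toNNReal, ?_, ?_, ?_⟩
    · intro i; dsimp only; rw [hUd i]; simp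
    · intro i j; dsimp only; rw [hUs i j]
    · intro i
      dsimp only
      apply NNReal.coe_injective
      push_cast
      calc ∑ j, ((U i j).toNNReal : ℝ) = ∑ j, U i j := by
            refine Finset.sum_congr rfl fun j _ => Real.coe_toNNReal _ (hU0 i j)
        _ = (p i : ℝ) := hUr i (Finset.mem_univ i)
end

section
/- Let n ≥ 2 and suppose all countries are pairwise adversaries and for every i, p_i < Σ_{j≠i} p_j. Fix a country i₀. Then there exists a nonnegative matrix U with row sums p_i, zero diagonal, such that σ_{i₀}(U) > τ_{i₀}(U) and σ_j(U) < τ_j(U) for every j ≠ i₀, where σ_i(U) = U_{ii} + Σ_{j≠i} U_{ij} and τ_i(U) = Σ_{j≠i} U_{ji}. -/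
open Finset

/-- Explicit solution when some index is "tight": `r a + c a = total`. -/
private lemma tight_construction {n : ℕ} (r c : Fin n → ℝ) (a : Fin n)
    (hr : ∀ i, 0 ≤ r i) (hc : ∀ i, 0 ≤ c i)
    (hsum : ∑ i, r i = ∑ i, c i)
    (htight : r a + c a = ∑ i, r i) :
    ∃ U : Fin n → Fin n → ℝ, (∀ i j, 0 ≤ U i j) ∧ (∀ i, U i i = 0) ∧
      (∀ i, ∑ j, U i j = r i) ∧ (∀ j, ∑ i, U i j = c j) := by
  refine ⟨fun i j => if i = a then (if j = a then 0 else c j) else (if j = a then r i else 0),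
    ?_, ?_, ?_, ?_⟩
  · intro i j
    by_cases hi : i = a <;> by_cases hj : j = a <;> simp [hi, hj, hr, hc]
  · intro i
    by_cases hi : i = a <;> simp [hi]
  · intro i
    by_cases hi : i = a
    · subst hi
      have h1 : ∑ j, (if i = i then (if j = i then 0 else c j) else (if j = i then r i else 0))
          = ∑ j, (c j - if j = i then c j else 0) := by
        apply sum_congr rfl
        intro j _
        by_cases hj : j = i <;> simp [hj]
      rw [h1, sum_sub_distrib]
      simp only [sum_ite_eq', mem_univ, if_true]
      linarith
    · have h1 : ∑ j, (if i = a then (if j = a then 0 else c j) else (if j = a then r i else 0))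
          = ∑ j, (if j = a then r i else 0) := by
        apply sum_congr rfl; intro j _; simp [hi]
      rw [h1]
      simp
  · intro j
    by_cases hj : j = a
    · subst hj
      have h1 : ∑ i, (if i = j then (if j = j then 0 else c j) else (if j = j then r i else 0))
          = ∑ i, (r i - if i = j then r i else 0) := by
        apply sum_congr rfl
        intro i _
        by_cases hi : i = j <;> simp [hi]
      rw [h1, sum_sub_distrib]
      simp only [sum_ite_eq', mem_univ, if_true]
      linarith
    · have h1 : ∑ i, (if i = a then (if j = a then 0 else c j) else (if j = a then r i else 0))
          = ∑ i, (if i = a then c j else 0) := by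
        apply sum_congr rfl; intro i _; by_cases hi : i = a <;> simp [hi, hj]
      rw [h1]
      simp

/-- Adding `δ` on the edge `(i₀, j₀)` to a solution of the reduced problem. -/
private lemma add_edge {n : ℕ} (r c : Fin n → ℝ) (i₀ j₀ : Fin n) (hne : i₀ ≠ j₀)
    (δ : ℝ) (hδ : 0 ≤ δ) (U' : Fin n → Fin n → ℝ)
    (h1 : ∀ i j, 0 ≤ U' i j) (h2 : ∀ i, U' i i = 0)
    (h3 : ∀ i, ∑ j, U' i j = Function.update r i₀ (r i₀ - δ) i)
    (h4 : ∀ j, ∑ i, U' i j = Function.update c j₀ (c j₀ - δ) j) :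
    ∃ U : Fin n → Fin n → ℝ, (∀ i j, 0 ≤ U i j) ∧ (∀ i, U i i = 0) ∧
      (∀ i, ∑ j, U i j = r i) ∧ (∀ j, ∑ i, U i j = c j) := by
  refine ⟨fun i j => U' i j + if i = i₀ ∧ j = j₀ then δ else 0, ?_, ?_, ?_, ?_⟩
  · intro i j
    show 0 ≤ U' i j + if i = i₀ ∧ j = j₀ then δ else 0
    by_cases h : i = i₀ ∧ j = j₀
    · rw [if_pos h]
      linarith [h1 i j]
    · rw [if_neg h]
      simpa using h1 i j
  · intro i
    have : ¬ (i = i₀ ∧ i = j₀) := by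
      rintro ⟨rfl, rfl⟩; exact hne rfl
    simp [h2 i, this]
  · intro i
    rw [sum_add_distrib, h3 i]
    have : ∑ j, (if i = i₀ ∧ j = j₀ then δ else 0) = if i = i₀ then δ else 0 := by
      by_cases h : i = i₀ <;> simp [h]
    rw [this]
    by_cases h : i = i₀
    · subst h; simp [Function.update_self]
    · simp [Function.update_of_ne h, h]
  · intro j
    rw [sum_add_distrib, h4 j]
    have : ∑ i, (if i = i₀ ∧ j = j₀ then δ else 0) = if j = j₀ then δ else 0 := by
      by_cases h : j = j₀ <;> simp [h]
    rw [this]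
    by_cases h : j = j₀
    · subst h; simp [Function.update_self]
    · simp [Function.update_of_ne h, h]

private lemma transport {n : ℕ} : ∀ N : ℕ, ∀ r c : Fin n → ℝ,
    (∀ i, 0 ≤ r i) → (∀ i, 0 ≤ c i) → (∑ i, r i = ∑ i, c i) →
    (∀ i, r i + c i ≤ ∑ i, r i) →
    ((univ.filter fun i => 0 < r i).card + (univ.filter fun i => 0 < c i).card ≤ N) →
    ∃ U : Fin n → Fin n → ℝ, (∀ i j, 0 ≤ U i j) ∧ (∀ i, U i i = 0) ∧
      (∀ i, ∑ j, U i j = r i) ∧ (∀ j, ∑ i, U i j = c j) := by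
  intro N
  induction N with
  | zero =>
    intro r c hr hc hsum hcond hN
    have hrz : ∀ i, r i = 0 := by
      intro i
      by_contra h
      have : i ∈ univ.filter fun i => 0 < r i := by
        simp [lt_of_le_of_ne (hr i) (Ne.symm h)]
      have : 1 ≤ (univ.filter fun i => 0 < r i).card := card_pos.mpr ⟨i, this⟩
      omega
    have hcz : ∀ i, c i = 0 := by
      intro i
      by_contra h
      have : i ∈ univ.filter fun i => 0 < c i := by
        simp [lt_of_le_of_ne (hc i) (Ne.symm h)]
      have : 1 ≤ (univ.filter fun i => 0 < c i).card := card_pos.mpr ⟨i, this⟩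
      omega
    exact ⟨fun _ _ => 0, fun _ _ => le_refl 0, fun _ => rfl,
      fun i => by simp [hrz i], fun j => by simp [hcz j]⟩
  | succ N ih =>
    intro r c hr hc hsum hcond hN
    set S := ∑ i, r i with hS
    by_cases htight : ∃ a, r a + c a = S
    · obtain ⟨a, ha⟩ := htight
      exact tight_construction r c a hr hc hsum ha
    · push_neg at htight
      have hstrict : ∀ a, r a + c a < S := fun a => lt_of_le_of_ne (hcond a) (htight a)
      by_cases hS0 : S ≤ 0
      · refine ⟨fun _ _ => 0, fun _ _ => le_refl 0, fun _ => rfl, ?_, ?_⟩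
        · intro i
          exfalso
          have := hstrict i
          have := hr i
          have := hc i
          linarith
        · intro j
          exfalso
          have := hstrict j
          have := hr j
          have := hc j
          linarith
      · push_neg at hS0
        -- choose is with r is > 0
        have hex : ∃ i, 0 < r i := by
          by_contra h
          push_neg at h
          have : S ≤ 0 := sum_nonpos fun i _ => h i
          linarith
        obtain ⟨is, his⟩ := hex
        have hci : c is < S - r is := by have := hstrict is; linarith
        have hexj : ∃ j ∈ univ.erase is, 0 < c j := by
          by_contra h
          push_neg at h
          have h1 : ∑ j ∈ univ.erase is, c j ≤ 0 := sum_nonpos h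
          have h2 : ∑ j ∈ univ.erase is, c j = (∑ j, c j) - c is :=
            sum_erase_eq_sub (mem_univ is)
          rw [← hsum] at h2
          linarith
        obtain ⟨js, hjsmem, hjs⟩ := hexj
        have hne : is ≠ js := fun h => (mem_erase.mp hjsmem).1 h.symm
        set δ0 := min (r is) (c js) with hδ0def
        have hδ0 : 0 < δ0 := lt_min his hjs
        by_cases hk : ∃ k, k ≠ is ∧ k ≠ js ∧ S - r k - c k ≤ δ0
        · obtain ⟨k, hki, hkj, hkle⟩ := hk
          set δ := S - r k - c k with hδdef
          have hδpos : 0 < δ := by have := hstrict k; simp [hδdef]; linarith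
          have hδr : δ ≤ r is := le_trans hkle (min_le_left _ _)
          have hδc : δ ≤ c js := le_trans hkle (min_le_right _ _)
          set r' := Function.update r is (r is - δ) with hr'def
          set c' := Function.update c js (c js - δ) with hc'def
          have hr'sum : ∑ i, r' i = S - δ := by
            rw [hr'def, Finset.sum_update_of_mem (mem_univ is),
              Finset.sdiff_singleton_eq_erase, sum_erase_eq_sub (mem_univ is)]
            ring_nf
            linarith [hS]
          have hc'sum : ∑ i, c' i = S - δ := by
            rw [hc'def, Finset.sum_update_of_mem (mem_univ js),
              Finset.sdiff_singleton_eq_erase, sum_erase_eq_sub (mem_univ js), ← hsum]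
            ring
          have hr'nn : ∀ i, 0 ≤ r' i := by
            intro i
            by_cases h : i = is
            · subst h; rw [hr'def, Function.update_self]; linarith
            · rw [hr'def, Function.update_of_ne h]; exact hr i
          have hc'nn : ∀ i, 0 ≤ c' i := by
            intro i
            by_cases h : i = js
            · subst h; rw [hc'def, Function.update_self]; linarith
            · rw [hc'def, Function.update_of_ne h]; exact hc i
          have hsum' : ∑ i, r' i = ∑ i, c' i := by rw [hr'sum, hc'sum]
          have htightk : r' k + c' k = ∑ i, r' i := by
            rw [hr'def, hc'def, Function.update_of_ne hki, Function.update_of_ne hkj, hr'sum]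
            simp [hδdef]; ring
          obtain ⟨U', hU1, hU2, hU3, hU4⟩ := tight_construction r' c' k hr'nn hc'nn hsum' htightk
          exact add_edge r c is js hne δ (le_of_lt hδpos) U' hU1 hU2 hU3 hU4
        · push_neg at hk
          set r' := Function.update r is (r is - δ0) with hr'def
          set c' := Function.update c js (c js - δ0) with hc'def
          have hδ0r : δ0 ≤ r is := min_le_left _ _
          have hδ0c : δ0 ≤ c js := min_le_right _ _
          have hr'sum : ∑ i, r' i = S - δ0 := by
            rw [hr'def, Finset.sum_update_of_mem (mem_univ is),
              Finset.sdiff_singleton_eq_erase, sum_erase_eq_sub (mem_univ is)]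
            ring_nf
            linarith [hS]
          have hc'sum : ∑ i, c' i = S - δ0 := by
            rw [hc'def, Finset.sum_update_of_mem (mem_univ js),
              Finset.sdiff_singleton_eq_erase, sum_erase_eq_sub (mem_univ js), ← hsum]
            ring
          have hr'nn : ∀ i, 0 ≤ r' i := by
            intro i
            by_cases h : i = is
            · subst h; rw [hr'def, Function.update_self]; linarith
            · rw [hr'def, Function.update_of_ne h]; exact hr i
          have hc'nn : ∀ i, 0 ≤ c' i := by
            intro i
            by_cases h : i = js
            · subst h; rw [hc'def, Function.update_self]; linarith
            · rw [hc'def, Function.update_of_ne h]; exact hc i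
          have hsum' : ∑ i, r' i = ∑ i, c' i := by rw [hr'sum, hc'sum]
          have hcond' : ∀ i, r' i + c' i ≤ ∑ i, r' i := by
            intro i
            rw [hr'sum]
            by_cases h1 : i = is
            · subst h1
              rw [hr'def, Function.update_self, hc'def, Function.update_of_ne hne]
              have := hstrict i
              linarith
            · by_cases h2 : i = js
              · subst h2
                rw [hc'def, Function.update_self, hr'def, Function.update_of_ne h1]
                have := hstrict i
                linarith
              · rw [hr'def, Function.update_of_ne h1, hc'def, Function.update_of_ne h2]
                have := hk i h1 h2
                linarith
          -- measure decreases
          have hsubr : (univ.filter fun i => 0 < r' i) ⊆ (univ.filter fun i => 0 < r i) := by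
            intro x hx
            simp only [mem_filter, mem_univ, true_and] at hx ⊢
            by_cases h : x = is
            · subst h; linarith
            · rw [hr'def, Function.update_of_ne h] at hx; exact hx
          have hsubc : (univ.filter fun i => 0 < c' i) ⊆ (univ.filter fun i => 0 < c i) := by
            intro x hx
            simp only [mem_filter, mem_univ, true_and] at hx ⊢
            by_cases h : x = js
            · subst h; linarith
            · rw [hc'def, Function.update_of_ne h] at hx; exact hx
          have hmeas : (univ.filter fun i => 0 < r' i).card + (univ.filter fun i => 0 < c' i).card ≤ N := by
            rcases min_cases (r is) (c js) with ⟨hmin, _⟩ | ⟨hmin, _⟩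
            · -- δ0 = r is : is leaves the r-filter
              have hz : r' is = 0 := by
                have hd : δ0 = r is := hδ0def.trans hmin
                simp [hr'def, hd]
              have hsub2 : (univ.filter fun i => 0 < r' i) ⊆ (univ.filter fun i => 0 < r i).erase is := by
                intro x hx
                rw [mem_erase]
                constructor
                · rintro rfl
                  rw [mem_filter] at hx
                  rw [hz] at hx
                  exact lt_irrefl 0 hx.2
                · exact hsubr hx
              have h1 : (univ.filter fun i => 0 < r' i).card ≤ ((univ.filter fun i => 0 < r i).erase is).card :=
                card_le_card hsub2
              have hismem : is ∈ univ.filter fun i => 0 < r i := by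
                simp [his]
              have h2 : ((univ.filter fun i => 0 < r i).erase is).card =
                  (univ.filter fun i => 0 < r i).card - 1 := card_erase_of_mem hismem
              have h3 : 1 ≤ (univ.filter fun i => 0 < r i).card := card_pos.mpr ⟨is, hismem⟩
              have h4 : (univ.filter fun i => 0 < c' i).card ≤ (univ.filter fun i => 0 < c i).card :=
                card_le_card hsubc
              omega
            · have hz : c' js = 0 := by
                have hd : δ0 = c js := hδ0def.trans hmin
                simp [hc'def, hd]
              have hsub2 : (univ.filter fun i => 0 < c' i) ⊆ (univ.filter fun i => 0 < c i).erase js := by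
                intro x hx
                rw [mem_erase]
                constructor
                · rintro rfl
                  rw [mem_filter] at hx
                  rw [hz] at hx
                  exact lt_irrefl 0 hx.2
                · exact hsubc hx
              have h1 : (univ.filter fun i => 0 < c' i).card ≤ ((univ.filter fun i => 0 < c i).erase js).card :=
                card_le_card hsub2
              have hjsmem : js ∈ univ.filter fun i => 0 < c i := by
                simp [hjs]
              have h2 : ((univ.filter fun i => 0 < c i).erase js).card =
                  (univ.filter fun i => 0 < c i).card - 1 := card_erase_of_mem hjsmem
              have h3 : 1 ≤ (univ.filter fun i => 0 < c i).card := card_pos.mpr ⟨js, hjsmem⟩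
              have h4 : (univ.filter fun i => 0 < r' i).card ≤ (univ.filter fun i => 0 < r i).card :=
                card_le_card hsubr
              omega
          obtain ⟨U', hU1, hU2, hU3, hU4⟩ := ih r' c' hr'nn hc'nn hsum' hcond' hmeas
          exact add_edge r c is js hne δ0 (le_of_lt hδ0) U' hU1 hU2 hU3 hU4

theorem sole_survivor_exists {n : ℕ} (hn : 2 ≤ n) (p : Fin n → ℝ)
    (hp : ∀ i, 0 < p i)
    (hlt : ∀ i, p i < ∑ j ∈ Finset.univ.erase i, p j)
    (i₀ : Fin n) :
    ∃ U : Fin n → Fin n → ℝ,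
      (∀ i j, 0 ≤ U i j) ∧
      (∀ i, U i i = 0) ∧
      (∀ i, ∑ j, U i j = p i) ∧
      (U i₀ i₀ + ∑ j ∈ Finset.univ.erase i₀, U i₀ j >
        ∑ j ∈ Finset.univ.erase i₀, U j i₀) ∧
      (∀ j, j ≠ i₀ →
        U j j + ∑ k ∈ Finset.univ.erase j, U j k <
          ∑ k ∈ Finset.univ.erase j, U k j) := by
  have hn0 : 0 < n := by omega
  have hnR : (0 : ℝ) < n := by exact_mod_cast hn0
  set S := ∑ j, p j with hSdef
  have herase : ∀ i : Fin n, ∑ j ∈ univ.erase i, p j = S - p i :=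
    fun i => sum_erase_eq_sub (mem_univ i)
  have h2p : ∀ i, 2 * p i < S := by
    intro i
    have := hlt i
    rw [herase i] at this
    linarith
  have hne : (univ : Finset (Fin n)).Nonempty := ⟨i₀, mem_univ i₀⟩
  set m := univ.inf' hne (fun j => S - 2 * p j) with hm
  have hmpos : 0 < m := by
    rw [hm, Finset.lt_inf'_iff]
    intro b _
    linarith [h2p b]
  set ε := min (p i₀ / n) m / 2 with hε
  have hεpos : 0 < ε := by
    apply div_pos _ two_pos
    exact lt_min (div_pos (hp i₀) hnR) hmpos
  have hεm : ∀ j : Fin n, ε ≤ S - 2 * p j := by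
    intro j
    have h1 : m ≤ S - 2 * p j := Finset.inf'_le _ (mem_univ j)
    have h2 : ε ≤ m / 2 := by
      rw [hε]
      apply div_le_div_of_nonneg_right (min_le_right _ _) (by norm_num)
    linarith
  have hεn : (n : ℝ) * ε ≤ p i₀ / 2 := by
    have h2 : ε ≤ (p i₀ / n) / 2 := by
      rw [hε]
      apply div_le_div_of_nonneg_right (min_le_left _ _) (by norm_num)
    have h3 : (n : ℝ) * ε ≤ n * ((p i₀ / n) / 2) := by
      apply mul_le_mul_of_nonneg_left h2 (le_of_lt hnR)
    have h4 : (n : ℝ) * ((p i₀ / n) / 2) = p i₀ / 2 := by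
      field_simp
    linarith
  have hk1 : (1 : ℝ) ≤ ((n - 1 : ℕ) : ℝ) := by
    have : 1 ≤ n - 1 := by omega
    exact_mod_cast this
  have hkn : ((n - 1 : ℕ) : ℝ) ≤ (n : ℝ) := by
    exact_mod_cast Nat.sub_le n 1
  set c : Fin n → ℝ := fun j => if j = i₀ then p i₀ - (n - 1 : ℕ) * ε else p j + ε with hc
  have hkε : ((n - 1 : ℕ) : ℝ) * ε ≤ p i₀ / 2 := by
    have := mul_le_mul_of_nonneg_right hkn (le_of_lt hεpos)
    linarith
  have hcnn : ∀ j, 0 ≤ c j := by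
    intro j
    simp only [hc]
    by_cases h : j = i₀
    · rw [if_pos h]
      have := hp i₀
      linarith
    · rw [if_neg h]
      have := hp j
      linarith
  have hcsum : ∑ j, p j = ∑ j, c j := by
    have h1 : c i₀ + ∑ j ∈ univ.erase i₀, c j = ∑ j, c j :=
      Finset.add_sum_erase univ c (mem_univ i₀)
    have h2 : ∑ j ∈ univ.erase i₀, c j = ∑ j ∈ univ.erase i₀, (p j + ε) := by
      apply sum_congr rfl
      intro j hj
      simp only [hc]
      rw [if_neg (mem_erase.mp hj).1]
    have h3 : ∑ j ∈ univ.erase i₀, (p j + ε) = (S - p i₀) + (n - 1 : ℕ) * ε := by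
      rw [sum_add_distrib, herase i₀, sum_const, card_erase_of_mem (mem_univ i₀), card_univ,
        Fintype.card_fin, nsmul_eq_mul]
    have h4 : c i₀ = p i₀ - (n - 1 : ℕ) * ε := by rw [hc]; simp
    rw [← h1, h2, h3, h4]
    ring_nf
    linarith [hSdef]
  have hcond : ∀ i, p i + c i ≤ ∑ j, p j := by
    intro i
    simp only [hc, ← hSdef]
    by_cases h : i = i₀
    · subst h
      rw [if_pos rfl]
      have h1 := h2p i
      have h2 : 0 ≤ ((n - 1 : ℕ) : ℝ) * ε := by positivity
      linarith
    · rw [if_neg h]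
      have := hεm i
      linarith
  obtain ⟨U, hU1, hU2, hU3, hU4⟩ := transport
    ((univ.filter fun i => 0 < p i).card + (univ.filter fun i => 0 < c i).card)
    p c (fun i => le_of_lt (hp i)) hcnn hcsum hcond (le_refl _)
  refine ⟨U, hU1, hU2, hU3, ?_, ?_⟩
  · have hrow : U i₀ i₀ + ∑ j ∈ univ.erase i₀, U i₀ j = p i₀ := by
      rw [Finset.add_sum_erase univ (fun j => U i₀ j) (mem_univ i₀)]
      exact hU3 i₀
    have hcol : ∑ j ∈ univ.erase i₀, U j i₀ = c i₀ := by
      have h1 : U i₀ i₀ + ∑ j ∈ univ.erase i₀, U j i₀ = ∑ j, U j i₀ :=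
        Finset.add_sum_erase univ (fun j => U j i₀) (mem_univ i₀)
      rw [hU2 i₀] at h1
      rw [← hU4 i₀, ← h1]
      ring
    rw [hrow, hcol]
    simp only [hc, if_pos rfl]
    have : 0 < ((n - 1 : ℕ) : ℝ) * ε := by
      apply mul_pos _ hεpos
      linarith
    linarith
  · intro j hj
    have hrow : U j j + ∑ k ∈ univ.erase j, U j k = p j := by
      rw [Finset.add_sum_erase univ (fun k => U j k) (mem_univ j)]
      exact hU3 j
    have hcol : ∑ k ∈ univ.erase j, U k j = c j := by
      have h1 : U j j + ∑ k ∈ univ.erase j, U k j = ∑ k, U k j :=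
        Finset.add_sum_erase univ (fun k => U k j) (mem_univ j)
      rw [hU2 j] at h1
      rw [← hU4 j, ← h1]
      ring
    rw [hrow, hcol]
    simp only [hc, if_neg hj]
    linarith
end

section
/- (Pairing on complete graph minus one vertex) Let n ≥ 3, let all countries in Fin n be pairwise adversaries, fix i ∈ Fin n, and suppose that on Fin n \ {i} no country's power exceeds the sum of the others' powers in Fin n \ {i}, i.e., for all j ≠ i, p_j ≤ Σ_{k≠i, k≠j} p_k. Then there exists a nonnegative symmetric matrix U' indexed by Fin n \ {i} with zero diagonal and row sums Σ_k U'_{jk} = p_j for all j ≠ i. -/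
open Finset

private lemma merge_step {ι : Type*} [DecidableEq ι] (s : Finset ι) (p : ι → ℝ) (a b : ι)
    (has : a ∈ s) (hbs : b ∈ s) (hba : b ≠ a)
    (hpos : ∀ j ∈ s, 0 ≤ p j)
    (V' : ι → ι → ℝ)
    (hV'pos : ∀ j k, 0 ≤ V' j k) (hV'diag : ∀ j, V' j j = 0)
    (hV'symm : ∀ j k, V' j k = V' k j)
    (hV'sum : ∀ j ∈ s.erase b, ∑ k ∈ s.erase b, V' j k
      = Function.update p a (p a + p b) j) :
    ∃ V : ι → ι → ℝ, (∀ j k, 0 ≤ V j k) ∧ (∀ j, V j j = 0) ∧ (∀ j k, V j k = V k j)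
      ∧ (∀ j ∈ s, ∑ k ∈ s, V j k = p j) := by
  set q : ℝ := p a + p b with hq
  set s' : Finset ι := s.erase b with hs'
  have has' : a ∈ s' := mem_erase.mpr ⟨Ne.symm hba, has⟩
  have hbs'' : b ∈ s.erase a := mem_erase.mpr ⟨hba, hbs⟩
  have hpa0 : 0 ≤ p a := hpos a has
  have hpb0 : 0 ≤ p b := hpos b hbs
  have hq0' : 0 ≤ q := by rw [hq]; linarith
  have hVsa : ∑ k ∈ s', V' a k = q := by
    rw [hV'sum a has', Function.update_self]
  have hq0 : q = 0 → ∀ k ∈ s', V' a k = 0 := by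
    intro h0
    exact (sum_eq_zero_iff_of_nonneg (fun i _ => hV'pos a i)).mp (by rw [hVsa, h0])
  have Fa : p a / q * q = p a := by
    by_cases h0 : q = 0
    · have : p a = 0 := by rw [hq] at h0; linarith
      rw [h0, this]; simp
    · exact div_mul_cancel₀ _ h0
  have Fb : p b / q * q = p b := by
    by_cases h0 : q = 0
    · have : p b = 0 := by rw [hq] at h0; linarith
      rw [h0, this]; simp
    · exact div_mul_cancel₀ _ h0
  have hVa' : ∑ k ∈ s'.erase a, V' a k = q := by
    have h2 := add_sum_erase s' (V' a) has'
    rw [hV'diag a, zero_add] at h2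
    rw [h2, hVsa]
  set cf : ι → ℝ := fun x => if x = a then p a / q else if x = b then p b / q else 1
    with hcf
  set rr : ι → ι := fun x => if x = b then a else x with hrr
  set V : ι → ι → ℝ :=
    fun j k => if j = k then 0 else cf j * cf k * V' (rr j) (rr k) with hV
  have hcf0 : ∀ x, 0 ≤ cf x := by
    intro x
    rw [hcf]
    dsimp only
    split_ifs
    · exact div_nonneg hpa0 hq0'
    · exact div_nonneg hpb0 hq0'
    · exact zero_le_one
  have hdiag : ∀ j, V j j = 0 := by
    intro j; rw [hV]; simp
  have hsymm : ∀ j k, V j k = V k j := by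
    intro j k
    by_cases h : j = k
    · subst h; rfl
    · rw [hV]; dsimp only
      rw [if_neg h, if_neg (Ne.symm h), hV'symm]; ring
  have hVab : V a b = 0 := by
    rw [hV]; dsimp only
    rw [if_neg (Ne.symm hba)]
    rw [hrr]; dsimp only
    rw [if_neg (Ne.symm hba), if_pos rfl, hV'diag, mul_zero]
  have hVentry1 : ∀ k, k ≠ a → k ≠ b → V a k = p a / q * V' a k := by
    intro k hka hkb
    rw [hV]; dsimp only
    rw [if_neg (Ne.symm hka)]
    rw [hcf, hrr]; dsimp only
    rw [if_pos rfl, if_neg hka, if_neg hkb, if_neg (Ne.symm hba), if_neg hkb, mul_one]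
  have hVentry2 : ∀ k, k ≠ a → k ≠ b → V b k = p b / q * V' a k := by
    intro k hka hkb
    rw [hV]; dsimp only
    rw [if_neg (Ne.symm hkb)]
    rw [hcf, hrr]; dsimp only
    rw [if_neg hba, if_pos rfl, if_neg hka, if_neg hkb, if_pos rfl, if_neg hkb, mul_one]
  have hVentry4 : ∀ j k, j ≠ a → j ≠ b → k ≠ a → k ≠ b → j ≠ k → V j k = V' j k := by
    intro j k hja hjb hka hkb hjk
    rw [hV]; dsimp only
    rw [if_neg hjk]
    rw [hcf, hrr]; dsimp only
    rw [if_neg hja, if_neg hjb, if_neg hka, if_neg hkb, if_neg hjb, if_neg hkb,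
      one_mul, one_mul]
  refine ⟨V, ?_, hdiag, hsymm, ?_⟩
  · intro j k
    rw [hV]; dsimp only
    split_ifs
    · exact le_refl _
    · exact mul_nonneg (mul_nonneg (hcf0 j) (hcf0 k)) (hV'pos _ _)
  · intro j hj
    by_cases hja : j = a
    · subst hja
      rw [← add_sum_erase s (V j) has, hdiag j, zero_add,
        ← add_sum_erase (s.erase j) (V j) hbs'', hVab, zero_add]
      rw [sum_congr rfl (fun k hk => hVentry1 k (mem_erase.mp (mem_of_mem_erase hk)).1
        (mem_erase.mp hk).1)]
      rw [← mul_sum, erase_right_comm, ← hs', hVa', Fa]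
    · by_cases hjb : j = b
      · subst hjb
        have hVba : V j a = 0 := by rw [hsymm]; exact hVab
        rw [← add_sum_erase s (V j) hbs, hdiag j, zero_add,
          ← add_sum_erase (s.erase j) (V j) (mem_erase.mpr ⟨Ne.symm hba, has⟩),
          hVba, zero_add]
        rw [sum_congr rfl (fun k hk => hVentry2 k (mem_erase.mp hk).1
          (mem_erase.mp (mem_of_mem_erase hk)).1)]
        rw [← mul_sum, ← hs', hVa', Fb]
      · -- generic j
        have hjs' : j ∈ s' := mem_erase.mpr ⟨hjb, hj⟩
        have haj : a ∈ s.erase j := mem_erase.mpr ⟨fun h => hja (h.symm), has⟩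
        have hbj : b ∈ (s.erase j).erase a :=
          mem_erase.mpr ⟨hba, mem_erase.mpr ⟨fun h => hjb (h.symm), hbs⟩⟩
        have hajs' : a ∈ s'.erase j := mem_erase.mpr ⟨fun h => hja (h.symm), has'⟩
        have hsj : ∑ k ∈ s'.erase j, V' j k = p j := by
          have h2 := add_sum_erase s' (V' j) hjs'
          rw [hV'diag j, zero_add] at h2
          rw [h2, hV'sum j hjs', Function.update_of_ne hja]
        have hsja : ∑ k ∈ (s'.erase j).erase a, V' j k + V' j a = p j := by
          rw [sum_erase_add _ _ hajs', hsj]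
        have hkey : V j a + V j b = V' j a := by
          have e3 : V j a = p a / q * V' j a := by
            rw [hsymm, hVentry1 j hja hjb, hV'symm]
          have e4 : V j b = p b / q * V' j a := by
            rw [hsymm, hVentry2 j hja hjb, hV'symm]
          rw [e3, e4]
          by_cases h0 : q = 0
          · have hz : V' j a = 0 := by rw [hV'symm]; exact hq0 h0 j hjs'
            rw [hz]; ring
          · rw [div_mul_eq_mul_div, div_mul_eq_mul_div, ← add_div,
              ← add_mul, ← hq, mul_comm, mul_div_assoc, div_self h0, mul_one]
        rw [← add_sum_erase s (V j) hj, hdiag j, zero_add,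
          ← add_sum_erase (s.erase j) (V j) haj,
          ← add_sum_erase ((s.erase j).erase a) (V j) hbj]
        have hw : ((s.erase j).erase a).erase b = (s'.erase j).erase a := by
          rw [erase_right_comm]; congr 1; exact erase_right_comm
        rw [hw]
        rw [sum_congr rfl (fun k hk => hVentry4 j k hja hjb
          (mem_erase.mp hk).1 (by
            have := (mem_erase.mp (mem_of_mem_erase hk)).2
            rw [hs'] at this
            exact (mem_erase.mp this).1)
          (fun h => (mem_erase.mp (mem_of_mem_erase hk)).1 h.symm))]
        linarith [hkey, hsja]
private lemma real_balancing {ι : Type*} [DecidableEq ι] :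
    ∀ (m : ℕ) (s : Finset ι) (_ : s.card ≤ m) (p : ι → ℝ)
      (_ : ∀ j ∈ s, 0 ≤ p j) (_ : ∀ j ∈ s, p j ≤ ∑ k ∈ s.erase j, p k),
    ∃ V : ι → ι → ℝ, (∀ j k, 0 ≤ V j k) ∧ (∀ j, V j j = 0) ∧ (∀ j k, V j k = V k j)
      ∧ (∀ j ∈ s, ∑ k ∈ s, V j k = p j) := by
  intro m
  induction m with
  | zero =>
    intro s hs p _ _
    have hse : s = ∅ := card_eq_zero.mp (Nat.le_antisymm hs (Nat.zero_le _))
    subst hse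
    exact ⟨fun _ _ => 0, fun _ _ => le_refl _, fun _ => rfl, fun _ _ => rfl,
      fun j hj => absurd hj (notMem_empty j)⟩
  | succ m ih =>
    intro s hs p hpos hcond
    by_cases hsm : s.card ≤ m
    · exact ih s hsm p hpos hcond
    have hcard : s.card = m + 1 := Nat.le_antisymm hs (Nat.not_le.mp hsm)
    clear hs hsm
    match m, hcard, ih with
    | 0, hcard, ih =>
      -- card = 1
      obtain ⟨a, rfl⟩ := card_eq_one.mp hcard
      have hpa : p a = 0 := by
        have h1 := hcond a (mem_singleton_self a)
        have h2 := hpos a (mem_singleton_self a)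
        simp only [erase_singleton, sum_empty] at h1
        linarith
      refine ⟨fun _ _ => 0, fun _ _ => le_refl _, fun _ => rfl, fun _ _ => rfl, ?_⟩
      intro j hj
      rw [mem_singleton] at hj; subst hj
      simp [hpa]
    | 1, hcard, ih =>
      -- card = 2
      obtain ⟨a, b, hab, rfl⟩ := card_eq_two.mp hcard
      have h1 := hcond a (by simp)
      have h2 := hcond b (by simp)
      rw [show ({a, b} : Finset ι).erase a = {b} from
        erase_insert (by simp [hab])] at h1
      rw [show ({a, b} : Finset ι).erase b = {a} by
        rw [pair_comm]; exact erase_insert (by simp [Ne.symm hab])] at h2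
      simp only [sum_singleton] at h1 h2
      have hpab : p a = p b := le_antisymm h1 h2
      have hpa0 : 0 ≤ p a := hpos a (by simp)
      refine ⟨fun j k => if (j = a ∧ k = b) ∨ (j = b ∧ k = a) then p a else 0, ?_, ?_, ?_, ?_⟩
      · intro j k
        dsimp only
        split_ifs
        · exact hpa0
        · exact le_refl _
      · intro j
        dsimp only
        rw [if_neg]
        rintro (⟨rfl, rfl⟩ | ⟨rfl, rfl⟩) <;> exact hab rfl
      · intro j k
        dsimp only
        have : ((j = a ∧ k = b) ∨ (j = b ∧ k = a)) ↔ ((k = a ∧ j = b) ∨ (k = b ∧ j = a)) := by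
          tauto
        exact if_congr this rfl rfl
      · intro j hj
        rw [mem_insert, mem_singleton] at hj
        rcases hj with rfl | rfl
        · rw [sum_insert (by simp [hab]), sum_singleton]
          simp [hab, hab.symm]
        · rw [sum_insert (by simp [hab]), sum_singleton]
          simp [hab, hab.symm, hpab]
    | 2, hcard, ih =>
      -- card = 3
      obtain ⟨a, b, c, hab, hac, hbc, rfl⟩ := card_eq_three.mp hcard
      have hea : ({a, b, c} : Finset ι).erase a = {b, c} := by
        rw [erase_insert (by simp [hab, hac])]
      have heb : ({a, b, c} : Finset ι).erase b = {a, c} := by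
        rw [show ({a, b, c} : Finset ι) = {b, a, c} by
          ext x; simp; tauto]
        rw [erase_insert (by simp [hab.symm, hbc])]
      have hec : ({a, b, c} : Finset ι).erase c = {a, b} := by
        rw [show ({a, b, c} : Finset ι) = {c, a, b} by
          ext x; simp; tauto]
        rw [erase_insert (by simp [hac.symm, hbc.symm])]
      have h1 := hcond a (by simp)
      have h2 := hcond b (by simp)
      have h3 := hcond c (by simp)
      rw [hea, sum_insert (by simp [hbc]), sum_singleton] at h1
      rw [heb, sum_insert (by simp [hac]), sum_singleton] at h2
      rw [hec, sum_insert (by simp [hab]), sum_singleton] at h3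
      set e : ι → ι → ℝ := fun j k =>
        if j = a ∧ k = b then (p a + p b - p c) / 2
        else if j = a ∧ k = c then (p a + p c - p b) / 2
        else if j = b ∧ k = c then (p b + p c - p a) / 2
        else 0 with he
      refine ⟨fun j k => e j k + e k j, ?_, ?_, ?_, ?_⟩
      · intro j k
        dsimp only
        have hnn : ∀ x y, 0 ≤ e x y := by
          intro x y
          rw [he]; dsimp only
          split_ifs <;> linarith
        linarith [hnn j k, hnn k j]
      · intro j
        have hjj : e j j = 0 := by
          rw [he]; dsimp only
          split_ifs with g1 g2 g3
          · exact absurd (g1.1.symm.trans g1.2) hab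
          · exact absurd (g2.1.symm.trans g2.2) hac
          · exact absurd (g3.1.symm.trans g3.2) hbc
          · rfl
        dsimp only; rw [hjj]; ring
      · intro j k; dsimp only; ring
      · intro j hj
        have eab : e a b = (p a + p b - p c) / 2 := by simp [he, hab, hac, hbc, Ne.symm hab, Ne.symm hac, Ne.symm hbc]
        have eac : e a c = (p a + p c - p b) / 2 := by simp [he, hab, hac, hbc, Ne.symm hab, Ne.symm hac, Ne.symm hbc]
        have ebc : e b c = (p b + p c - p a) / 2 := by simp [he, hab, hac, hbc, Ne.symm hab, Ne.symm hac, Ne.symm hbc]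
        have eba : e b a = 0 := by simp [he, hab, hac, hbc, Ne.symm hab, Ne.symm hac, Ne.symm hbc]
        have eca : e c a = 0 := by simp [he, hab, hac, hbc, Ne.symm hab, Ne.symm hac, Ne.symm hbc]
        have ecb : e c b = 0 := by simp [he, hab, hac, hbc, Ne.symm hab, Ne.symm hac, Ne.symm hbc]
        have eaa : e a a = 0 := by simp [he, hab, hac, hbc, Ne.symm hab, Ne.symm hac, Ne.symm hbc]
        have ebb : e b b = 0 := by simp [he, hab, hac, hbc, Ne.symm hab, Ne.symm hac, Ne.symm hbc]
        have ecc : e c c = 0 := by simp [he, hab, hac, hbc, Ne.symm hab, Ne.symm hac, Ne.symm hbc]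
        have hsum : ∀ x, ∑ k ∈ ({a, b, c} : Finset ι), (e x k + e k x)
            = (e x a + e a x) + ((e x b + e b x) + (e x c + e c x)) := by
          intro x
          rw [sum_insert (by simp [hab, hac]), sum_insert (by simp [hbc]), sum_singleton]
        rw [mem_insert, mem_insert, mem_singleton] at hj
        rcases hj with rfl | rfl | rfl
        · rw [hsum, eaa, eab, eac, eba, eca]; ring
        · rw [hsum, ebb, eab, eba, ebc, ecb]; ring
        · rw [hsum, ecc, eac, eca, ebc, ecb]; ring
    | (m + 3), hcard, ih =>
      -- card ≥ 4 : merge the two smallest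
      have hne : s.Nonempty := card_pos.mp (by omega)
      obtain ⟨a, has, hamin⟩ := exists_min_image s p hne
      have hne' : (s.erase a).Nonempty := by
        rw [← card_pos, card_erase_of_mem has]; omega
      obtain ⟨b, hbs', hbmin⟩ := exists_min_image (s.erase a) p hne'
      have hba : b ≠ a := (mem_erase.mp hbs').1
      have hbs : b ∈ s := (mem_erase.mp hbs').2
      set q : ℝ := p a + p b with hq
      set p' : ι → ℝ := Function.update p a q with hp'
      have has' : a ∈ s.erase b := mem_erase.mpr ⟨Ne.symm hba, has⟩
      have hcard' : (s.erase b).card = m + 3 := by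
        rw [card_erase_of_mem hbs]; omega
      have hp'a : p' a = q := Function.update_self a q p
      have hp'ne : ∀ x, x ≠ a → p' x = p x := fun x hx => Function.update_of_ne hx q p
      have hpos' : ∀ j ∈ s.erase b, 0 ≤ p' j := by
        intro j hj
        by_cases hja : j = a
        · rw [hja, hp'a, hq]
          have := hpos a has; have := hpos b hbs; linarith
        · rw [hp'ne j hja]; exact hpos j (mem_erase.mp hj).2
      have hcond' : ∀ j ∈ s.erase b, p' j ≤ ∑ k ∈ (s.erase b).erase j, p' k := by
        intro j hj
        by_cases hja : j = a
        · subst hja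
          rw [hp'a]
          have hrw : ∑ k ∈ (s.erase b).erase j, p' k = ∑ k ∈ (s.erase j).erase b, p k := by
            rw [erase_right_comm]
            refine sum_congr rfl fun k hk => hp'ne k ?_
            exact (mem_erase.mp (mem_of_mem_erase hk)).1
          rw [hrw]
          set t := (s.erase j).erase b with ht
          have htcard : t.card = m + 2 := by
            rw [ht, card_erase_of_mem hbs', card_erase_of_mem has]; omega
          obtain ⟨c, hct⟩ := card_pos.mp (show 0 < t.card by omega)
          have hdtne : (t.erase c).Nonempty := by
            rw [← card_pos, card_erase_of_mem hct]; omega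
          obtain ⟨d, hdt'⟩ := hdtne
          have hcs : c ∈ s := mem_of_mem_erase (mem_of_mem_erase hct)
          have hds : d ∈ s :=
            mem_of_mem_erase (mem_of_mem_erase (mem_of_mem_erase hdt'))
          have hpc : p j ≤ p c := hamin c hcs
          have hpd : p b ≤ p d := hbmin d (mem_of_mem_erase (mem_of_mem_erase hdt'))
          have hsum : ∑ k ∈ t, p k = p c + (p d + ∑ k ∈ (t.erase c).erase d, p k) := by
            rw [← add_sum_erase t p hct, ← add_sum_erase (t.erase c) p hdt']
          have hrest : 0 ≤ ∑ k ∈ (t.erase c).erase d, p k := by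
            refine sum_nonneg fun k hk => hpos k ?_
            exact mem_of_mem_erase (mem_of_mem_erase (mem_of_mem_erase (mem_of_mem_erase hk)))
          rw [hsum, hq]; linarith
        · have hjs : j ∈ s := mem_of_mem_erase hj
          have hjb : j ≠ b := (mem_erase.mp hj).1
          rw [hp'ne j hja]
          have key : ∑ k ∈ (s.erase b).erase j, p' k = ∑ k ∈ s.erase j, p k := by
            have e1 : a ∈ (s.erase b).erase j := mem_erase.mpr ⟨fun h => hja h.symm, has'⟩
            have e2 : a ∈ s.erase j := mem_erase.mpr ⟨fun h => hja h.symm, has⟩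
            have e3 : b ∈ (s.erase j).erase a :=
              mem_erase.mpr ⟨hba, mem_erase.mpr ⟨fun h => hjb h.symm, hbs⟩⟩
            rw [← add_sum_erase _ p' e1, hp'a,
              ← add_sum_erase _ p e2, ← add_sum_erase _ p e3]
            have hseteq : ((s.erase b).erase j).erase a = ((s.erase j).erase a).erase b := by
              rw [show (s.erase b).erase j = (s.erase j).erase b from erase_right_comm]
              exact erase_right_comm
            rw [hseteq]
            have hpp : ∑ k ∈ ((s.erase j).erase a).erase b, p' k
                = ∑ k ∈ ((s.erase j).erase a).erase b, p k := by
              refine sum_congr rfl fun k hk => hp'ne k ?_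
              exact (mem_erase.mp (mem_of_mem_erase hk)).1
            rw [hpp, hq]; ring
          rw [key]; exact hcond j hjs
      obtain ⟨V', hV'pos, hV'diag, hV'symm, hV'sum⟩ :=
        ih (s.erase b) (by omega) p' hpos' hcond'
      exact merge_step s p a b has hbs hba hpos V' hV'pos hV'diag hV'symm hV'sum

theorem balancing_on_complement {n : ℕ} (hn : 3 ≤ n) (p : Fin n → NNReal)
    (i : Fin n)
    (h : ∀ j, j ≠ i → p j ≤ ∑ k ∈ (Finset.univ.erase i).erase j, p k) :
    ∃ U : {j : Fin n // j ≠ i} → {j : Fin n // j ≠ i} → NNReal,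
      (∀ j, U j j = 0) ∧ (∀ j k, U j k = U k j) ∧
      (∀ j, ∑ k, U j k = p j.val) := by
  classical
  set s : Finset (Fin n) := Finset.univ.erase i with hs
  set preal : Fin n → ℝ := fun j => (p j : ℝ) with hpreal
  have hpos : ∀ j ∈ s, 0 ≤ preal j := fun j _ => (p j).coe_nonneg
  have hcond : ∀ j ∈ s, preal j ≤ ∑ k ∈ s.erase j, preal k := by
    intro j hj
    have hji : j ≠ i := (Finset.mem_erase.mp hj).1
    simp only [hpreal]; exact_mod_cast h j hji
  obtain ⟨V, hVpos, hVdiag, hVsymm, hVsum⟩ :=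
    real_balancing s.card s le_rfl preal hpos hcond
  refine ⟨fun j k => (V j.1 k.1).toNNReal, ?_, ?_, ?_⟩
  · intro j; simp [hVdiag]
  · intro j k; simp [hVsymm j.1 k.1]
  · intro j
    have hjs : j.1 ∈ s := Finset.mem_erase.mpr ⟨j.2, Finset.mem_univ _⟩
    have hsub : ∑ k ∈ s, V j.1 k = ∑ k : {j : Fin n // j ≠ i}, V j.1 k.1 :=
      Finset.sum_subtype s (by intro x; simp [hs]) (fun k => V j.1 k)
    apply NNReal.coe_injective
    rw [NNReal.coe_sum]
    rw [Finset.sum_congr rfl (fun k _ => Real.coe_toNNReal _ (hVpos j.1 k.1))]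
    rw [← hsub, hVsum j.1 hjs]
end
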